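/- Let T be a rooted tree with root r, leaf set ℒ(T) and L(T) leaves. Let D_T(r) = Σ_{v ∈ ℒ(T)} d(v,r) be the sum of distances from the root to all leaves, and let TW(T) = Σ_{{v,w} ⊆ ℒ(T)} d(v,w) be the terminal Wiener index (the sum of distances over all unordered pairs of leaves). Then ρ_C(T) ≥ D_T(r) − TW(T)/L(T). -/

import Mathlib

open Matrix

/-- A rooted tree on a finite vertex type `V`, encoded by its root and the
parent function: the root is its own parent, and iterating the parent function
from any vertex eventually reaches the root.  (These conditions force the graph
whose edges join each non-root vertex to its parent to be a tree.) -/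
structure TreeOn (V : Type) [Fintype V] [DecidableEq V] where
  root : V
  parent : V → V
  parent_root : parent root = root
  reaches : ∀ v, ∃ k, parent^[k] v = root

namespace TreeOn

variable {V : Type} [Fintype V] [DecidableEq V]

/-- `u` is a (weak) ancestor of `v`: some iterate of the parent function sends
`v` to `u`.  (Any ancestor is reached within `Fintype.card V` steps, so the
bound makes the predicate decidable without changing its meaning.) -/
def IsAncestor (T : TreeOn V) (u v : V) : Prop :=
  ∃ k, k ≤ Fintype.card V ∧ T.parent^[k] v = u

instance (T : TreeOn V) (u v : V) : Decidable (T.IsAncestor u v) := by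
  have h : T.IsAncestor u v ↔ ∃ k ∈ Finset.range (Fintype.card V + 1), T.parent^[k] v = u := by
    simp [IsAncestor, Nat.lt_succ_iff]
  rw [h]; infer_instance

/-- The level of a vertex: its distance to the root. -/
def level (T : TreeOn V) (v : V) : ℕ := Nat.find (T.reaches v)

/-- The ancestral level `ℓ(v ∨ w)`: the level of the lowest common ancestor
of `v` and `w`, i.e. the greatest level of a common ancestor. -/
def lcaLevel (T : TreeOn V) (v w : V) : ℕ :=
  (Finset.univ.filter fun u => T.IsAncestor u v ∧ T.IsAncestor u w).sup T.level

/-- A leaf is a vertex with no children. -/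
def IsLeaf (T : TreeOn V) (v : V) : Prop := ∀ u, T.parent u = v → u = v

instance (T : TreeOn V) : DecidablePred T.IsLeaf := fun v =>
  inferInstanceAs (Decidable (∀ u, T.parent u = v → u = v))

/-- The type of leaves of `T`. -/
abbrev Leaf (T : TreeOn V) := {v : V // T.IsLeaf v}

/-- The ancestral matrix `C(T)`, indexed by the leaves of `T`, whose
`(v, w)` entry is the ancestral level `ℓ(v ∨ w)`. -/
noncomputable def ancMatrix (T : TreeOn V) : Matrix T.Leaf T.Leaf ℝ :=
  Matrix.of fun v w => (T.lcaLevel v.1 w.1 : ℝ)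

/-- The ancestral spectral radius `ρ_C(T)`: the largest eigenvalue of `C(T)`. -/
noncomputable def rhoC (T : TreeOn V) : ℝ :=
  sSup {μ : ℝ | ∃ x : T.Leaf → ℝ, x ≠ 0 ∧ T.ancMatrix.mulVec x = μ • x}

/-- The underlying simple graph of the tree: each non-root vertex is joined
to its parent. -/
def graph (T : TreeOn V) : SimpleGraph V :=
  SimpleGraph.fromRel fun u v => T.parent u = v ∧ u ≠ v

/-- The number of children (outdegree) of a vertex. -/
def childCount (T : TreeOn V) (v : V) : ℕ :=
  (Finset.univ.filter fun u => T.parent u = v ∧ u ≠ v).card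

end TreeOn


namespace TreeOn

variable {V : Type} [Fintype V] [DecidableEq V] (T : TreeOn V)


lemma iterate_root (k : ℕ) : T.parent^[k] T.root = T.root := by
  induction k with
  | zero => rfl
  | succ n ih => rw [Function.iterate_succ_apply', ih, T.parent_root]

lemma iterate_level (v : V) : T.parent^[T.level v] v = T.root := Nat.find_spec (T.reaches v)

lemma level_le {v : V} {k : ℕ} (h : T.parent^[k] v = T.root) : T.level v ≤ k :=
  Nat.find_min' _ h

lemma level_eq_zero {v : V} : T.level v = 0 ↔ v = T.root := by
  unfold level
  rw [Nat.find_eq_zero]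
  simp

lemma level_parent {v : V} (h : v ≠ T.root) : T.level (T.parent v) + 1 = T.level v := by
  have h1 : 1 ≤ T.level v := Nat.pos_of_ne_zero (fun h0 => h (T.level_eq_zero.1 h0))
  obtain ⟨m, hm⟩ : ∃ m, T.level v = m + 1 := ⟨T.level v - 1, by omega⟩
  have h2 : T.parent^[m] (T.parent v) = T.root := by
    have h5 := T.iterate_level v
    rw [hm, Function.iterate_succ_apply] at h5
    exact h5
  have h3 : T.level (T.parent v) ≤ m := T.level_le h2
  have h4 : T.level v ≤ T.level (T.parent v) + 1 := by
    apply T.level_le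
    rw [Function.iterate_succ_apply]
    exact T.iterate_level (T.parent v)
  omega

lemma level_iterate {v : V} : ∀ k, k ≤ T.level v → T.level (T.parent^[k] v) = T.level v - k := by
  intro k
  induction k with
  | zero => simp
  | succ k ih =>
    intro hk
    have hk' : k ≤ T.level v := by omega
    have hx : T.level (T.parent^[k] v) = T.level v - k := ih hk'
    have hne : T.parent^[k] v ≠ T.root := by
      intro h
      have := T.level_eq_zero.2 h
      omega
    have := T.level_parent hne
    rw [Function.iterate_succ_apply']
    omega

lemma level_le_card (v : V) : T.level v ≤ Fintype.card V := by
  have hinj : Set.InjOn (fun i => T.parent^[i] v) (Finset.range (T.level v + 1)) := by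
    intro i hi j hj hij
    simp only [Finset.coe_range, Set.mem_Iio] at hi hj
    have hi' : i ≤ T.level v := by omega
    have hj' : j ≤ T.level v := by omega
    have e1 := T.level_iterate i hi'
    have e2 := T.level_iterate j hj'
    simp only at hij
    rw [hij] at e1
    omega
  have := Finset.card_le_card_of_injOn (fun i => T.parent^[i] v)
    (fun a _ => Finset.mem_univ _) hinj
  simp only [Finset.card_range, Finset.card_univ] at this
  omega

lemma isAncestor_of_iterate {u v : V} {k : ℕ} (h : T.parent^[k] v = u) : T.IsAncestor u v := by
  rcases le_or_gt k (T.level v) with hk | hk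
  · exact ⟨k, hk.trans (T.level_le_card v), h⟩
  · have : u = T.root := by
      rw [← h, show k = (k - T.level v) + T.level v by omega, Function.iterate_add_apply,
        T.iterate_level, T.iterate_root]
    exact ⟨T.level v, T.level_le_card v, by rw [T.iterate_level, this]⟩

lemma isAncestor_iff {u v : V} :
    T.IsAncestor u v ↔ ∃ k, k ≤ T.level v ∧ T.parent^[k] v = u := by
  constructor
  · rintro ⟨k, hk, h⟩
    rcases le_or_gt k (T.level v) with hk' | hk'
    · exact ⟨k, hk', h⟩
    · have : u = T.root := by
        rw [← h, show k = (k - T.level v) + T.level v by omega, Function.iterate_add_apply,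
          T.iterate_level, T.iterate_root]
      exact ⟨T.level v, le_refl _, by rw [T.iterate_level, this]⟩
  · rintro ⟨k, hk, h⟩
    exact ⟨k, hk.trans (T.level_le_card v), h⟩

lemma isAncestor_refl (v : V) : T.IsAncestor v v :=
  T.isAncestor_of_iterate (k := 0) rfl

lemma level_le_of_isAncestor {u v : V} (h : T.IsAncestor u v) : T.level u ≤ T.level v := by
  obtain ⟨k, hk, h⟩ := T.isAncestor_iff.1 h
  rw [← h, T.level_iterate k hk]
  omega

lemma isAncestor_trans {u v w : V} (h1 : T.IsAncestor u v) (h2 : T.IsAncestor v w) :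
    T.IsAncestor u w := by
  obtain ⟨k, _, hk⟩ := h1
  obtain ⟨l, _, hl⟩ := h2
  exact T.isAncestor_of_iterate (k := k + l) (by rw [Function.iterate_add_apply, hl, hk])

lemma isAncestor_parent (v : V) : T.IsAncestor (T.parent v) v :=
  T.isAncestor_of_iterate (k := 1) rfl

lemma isAncestor_of_parent {u x : V} (h : T.IsAncestor u (T.parent x)) : T.IsAncestor u x :=
  T.isAncestor_trans h (T.isAncestor_parent x)

lemma isAncestor_parent_of_ne {u x : V} (h : T.IsAncestor u x) (hne : u ≠ x) :
    T.IsAncestor u (T.parent x) := by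
  obtain ⟨k, hk, h⟩ := h
  rcases Nat.eq_zero_or_pos k with h0 | h0
  · subst h0; exact absurd h.symm hne
  · obtain ⟨m, rfl⟩ : ∃ m, k = m + 1 := ⟨k - 1, by omega⟩
    exact T.isAncestor_of_iterate (k := m) (by rw [← Function.iterate_succ_apply]; exact h)

lemma parent_fixed {v : V} (hp : T.parent v = v) : v = T.root := by
  obtain ⟨k, hk⟩ := T.reaches v
  have hfix : ∀ n, T.parent^[n] v = v := by
    intro n
    induction n with
    | zero => rfl
    | succ n ih => rw [Function.iterate_succ_apply', ih, hp]
  rw [hfix k] at hk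
  exact hk

lemma lcaLevel_comm (v w : V) : T.lcaLevel v w = T.lcaLevel w v := by
  unfold lcaLevel
  congr 1
  ext u
  simp [and_comm]

lemma lcaLevel_le_left (v w : V) : T.lcaLevel v w ≤ T.level v :=
  Finset.sup_le fun u hu => T.level_le_of_isAncestor (Finset.mem_filter.1 hu).2.1

lemma le_lcaLevel {u v w : V} (h1 : T.IsAncestor u v) (h2 : T.IsAncestor u w) :
    T.level u ≤ T.lcaLevel v w :=
  Finset.le_sup (Finset.mem_filter.2 ⟨Finset.mem_univ _, h1, h2⟩)

lemma lcaLevel_self (w : V) : T.lcaLevel w w = T.level w :=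
  le_antisymm (T.lcaLevel_le_left w w) (T.le_lcaLevel (T.isAncestor_refl w) (T.isAncestor_refl w))

lemma lcaLevel_eq_of_anc {x w : V} (h : T.IsAncestor x w) : T.lcaLevel x w = T.level x :=
  le_antisymm (T.lcaLevel_le_left x w) (T.le_lcaLevel (T.isAncestor_refl x) h)

lemma lcaLevel_parent_of_not_anc {x w : V} (h : ¬ T.IsAncestor x w) :
    T.lcaLevel (T.parent x) w = T.lcaLevel x w := by
  unfold lcaLevel
  congr 1
  ext u
  simp only [Finset.mem_filter, Finset.mem_univ, true_and]
  constructor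
  · rintro ⟨h1, h2⟩
    exact ⟨T.isAncestor_of_parent h1, h2⟩
  · rintro ⟨h1, h2⟩
    have hne : u ≠ x := by rintro rfl; exact h h2
    exact ⟨T.isAncestor_parent_of_ne h1 hne, h2⟩

/-- The potential function used in the distance lower bound. -/
def pot (T : TreeOn V) (w x : V) : ℤ := (T.level x : ℤ) - 2 * T.lcaLevel x w

lemma pot_parent_sub {x : V} (hx : x ≠ T.root) (w : V) :
    T.pot w (T.parent x) - T.pot w x = 1 ∨ T.pot w (T.parent x) - T.pot w x = -1 := by
  have hlev := T.level_parent hx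
  by_cases hanc : T.IsAncestor x w
  · left
    have e1 : T.lcaLevel x w = T.level x := T.lcaLevel_eq_of_anc hanc
    have e2 : T.lcaLevel (T.parent x) w = T.level (T.parent x) :=
      T.lcaLevel_eq_of_anc (T.isAncestor_trans (T.isAncestor_parent x) hanc)
    unfold pot
    rw [e1, e2]
    push_cast
    omega
  · right
    have e := T.lcaLevel_parent_of_not_anc hanc
    unfold pot
    rw [e]
    push_cast
    omega

lemma pot_sub_le_of_adj {a b : V} (h : T.graph.Adj a b) (w : V) :
    T.pot w a - T.pot w b ≤ 1 := by
  rw [graph, SimpleGraph.fromRel_adj] at h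
  obtain ⟨hne, h | h⟩ := h
  · -- parent a = b
    have ha : a ≠ T.root := by
      rintro rfl
      apply h.2
      rw [← h.1, T.parent_root]
    have := T.pot_parent_sub ha w
    rw [h.1] at this
    omega
  · have hb : b ≠ T.root := by
      rintro rfl
      apply h.2
      rw [← h.1, T.parent_root]
    have := T.pot_parent_sub hb w
    rw [h.1] at this
    omega

lemma pot_sub_le_walk {a b : V} (w : V) (p : T.graph.Walk a b) :
    T.pot w a - T.pot w b ≤ p.length := by
  induction p with
  | nil => simp
  | cons h q ih =>
    have h1 := T.pot_sub_le_of_adj h w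
    simp only [SimpleGraph.Walk.length_cons]
    push_cast
    omega

lemma reachable_root (v : V) : T.graph.Reachable v T.root := by
  generalize hl : T.level v = n
  induction n generalizing v with
  | zero =>
    rw [T.level_eq_zero.1 hl]
  | succ n ih =>
    have hv : v ≠ T.root := by
      intro h; rw [h, T.level_eq_zero.2 rfl] at hl; omega
    have hadj : T.graph.Adj v (T.parent v) := by
      rw [graph, SimpleGraph.fromRel_adj]
      have hne : v ≠ T.parent v := fun h => hv (T.parent_fixed h.symm)
      exact ⟨hne, Or.inl ⟨rfl, hne⟩⟩
    have hlp : T.level (T.parent v) = n := by have := T.level_parent hv; omega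
    exact hadj.reachable.trans (ih _ hlp)

lemma dist_lower (v w : V) :
    (T.level v : ℤ) + T.level w - 2 * T.lcaLevel v w ≤ T.graph.dist v w := by
  have hr : T.graph.Reachable v w := (T.reachable_root v).trans (T.reachable_root w).symm
  obtain ⟨p, hp⟩ := hr.exists_walk_length_eq_dist
  have := T.pot_sub_le_walk w p
  rw [hp] at this
  unfold pot at this
  rw [T.lcaLevel_self] at this
  omega


end TreeOn


lemma rayleigh_ones {n : Type} [Fintype n] [DecidableEq n] [Nonempty n]
    {A : Matrix n n ℝ} (hA : A.IsHermitian) :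
    ∑ i, ∑ j, A i j ≤
      (sSup {μ : ℝ | ∃ x : n → ℝ, x ≠ 0 ∧ A.mulVec x = μ • x}) * (Fintype.card n) := by
  set S := {μ : ℝ | ∃ x : n → ℝ, x ≠ 0 ∧ A.mulVec x = μ • x} with hS
  -- bound for the eigenvalue set
  have hbdd : BddAbove S := by
    refine ⟨Finset.univ.sup' Finset.univ_nonempty (fun i => ∑ j, |A i j|), ?_⟩
    rintro μ ⟨x, hx0, hx⟩
    obtain ⟨i, -, hi⟩ := Finset.exists_max_image Finset.univ (fun i => |x i|)
      Finset.univ_nonempty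
    have hxi : 0 < |x i| := by
      obtain ⟨j, hj⟩ : ∃ j, x j ≠ 0 := Function.ne_iff.1 hx0
      exact lt_of_lt_of_le (abs_pos.2 hj) (hi j (Finset.mem_univ j))
    have hev : ∑ j, A i j * x j = μ * x i := by
      have := congrFun hx i
      simpa [Matrix.mulVec, dotProduct] using this
    have habs : |μ| * |x i| ≤ (∑ j, |A i j|) * |x i| := by
      calc |μ| * |x i| = |∑ j, A i j * x j| := by rw [← abs_mul, hev]
        _ ≤ ∑ j, |A i j * x j| := Finset.abs_sum_le_sum_abs _ _
        _ ≤ ∑ j, |A i j| * |x i| := by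
            apply Finset.sum_le_sum
            intro j _
            rw [abs_mul]
            exact mul_le_mul_of_nonneg_left (hi j (Finset.mem_univ j)) (abs_nonneg _)
        _ = (∑ j, |A i j|) * |x i| := by rw [Finset.sum_mul]
    have hmu : |μ| ≤ ∑ j, |A i j| := le_of_mul_le_mul_right habs hxi
    exact (le_abs_self μ).trans (hmu.trans (Finset.le_sup' (fun i => ∑ j, |A i j|) (Finset.mem_univ i)))
  -- the maximal eigenvalue
  obtain ⟨i₀, -, hmax⟩ := Finset.exists_max_image Finset.univ hA.eigenvalues
    Finset.univ_nonempty
  set μ := hA.eigenvalues i₀ with hμ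
  have hmem : μ ∈ S := by
    refine ⟨⇑(hA.eigenvectorBasis i₀), ?_, ?_⟩
    · intro h
      have := hA.eigenvectorBasis.orthonormal.ne_zero i₀
      apply this
      ext j
      exact congrFun h j
    · exact hA.mulVec_eigenvectorBasis i₀
  -- Rayleigh quotient with the all-ones vector
  set U : Matrix n n ℝ := (hA.eigenvectorUnitary : Matrix n n ℝ) with hU
  set o : n → ℝ := fun _ => 1 with ho
  set y : n → ℝ := (star U) *ᵥ o with hy
  have hspec := hA.spectral_theorem
  have hdiag : Matrix.diagonal (RCLike.ofReal ∘ hA.eigenvalues) = Matrix.diagonal hA.eigenvalues := by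
    congr 1
  have h1 : ∑ i, ∑ j, A i j = o ⬝ᵥ (A *ᵥ o) := by
    simp [dotProduct, Matrix.mulVec, ho]
  have hoU : o ᵥ* U = y := by
    rw [hy, ← Matrix.mulVec_transpose, Matrix.star_eq_conjTranspose,
      Matrix.conjTranspose_eq_transpose_of_trivial]
  have h2 : o ⬝ᵥ (A *ᵥ o) = y ⬝ᵥ (Matrix.diagonal hA.eigenvalues *ᵥ y) := by
    conv_lhs => rw [hspec, hdiag, Unitary.conjStarAlgAut_apply]
    rw [← Matrix.mulVec_mulVec, ← Matrix.mulVec_mulVec, Matrix.dotProduct_mulVec, hoU, hy]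
  have hUU : U * star U = (1 : Matrix n n ℝ) := by
    rw [hU, ← Unitary.coe_star]
    exact Unitary.coe_mul_star_self _
  have h4 : y ⬝ᵥ y = (Fintype.card n : ℝ) := by
    have step : y ⬝ᵥ y = o ⬝ᵥ ((U * star U) *ᵥ o) := by
      calc y ⬝ᵥ y = (o ᵥ* U) ⬝ᵥ y := by nth_rewrite 1 [← hoU]; rfl
        _ = o ⬝ᵥ (U *ᵥ y) := (Matrix.dotProduct_mulVec _ _ _).symm
        _ = o ⬝ᵥ ((U * star U) *ᵥ o) := by rw [hy, Matrix.mulVec_mulVec]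
    rw [step, hUU, Matrix.one_mulVec]
    simp [dotProduct, ho, Finset.card_univ]
  have h3 : y ⬝ᵥ (Matrix.diagonal hA.eigenvalues *ᵥ y) ≤ μ * (Fintype.card n : ℝ) := by
    have e : y ⬝ᵥ (Matrix.diagonal hA.eigenvalues *ᵥ y) = ∑ i, hA.eigenvalues i * (y i)^2 := by
      simp [dotProduct, Matrix.mulVec_diagonal]
      apply Finset.sum_congr rfl
      intro i _
      ring
    rw [e, ← h4]
    have : y ⬝ᵥ y = ∑ i, (y i)^2 := by
      simp [dotProduct]
      apply Finset.sum_congr rfl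
      intro i _
      ring
    rw [this, Finset.mul_sum]
    apply Finset.sum_le_sum
    intro i _
    exact mul_le_mul_of_nonneg_right (hmax i (Finset.mem_univ i)) (sq_nonneg _)
  have hfin : ∑ i, ∑ j, A i j ≤ μ * (Fintype.card n : ℝ) := by
    rw [h1, h2]; exact h3
  refine hfin.trans ?_
  exact mul_le_mul_of_nonneg_right (le_csSup hbdd hmem) (Nat.cast_nonneg _)

/-- `ρ_C(T) ≥ D_T(r) − TW(T)/L(T)`, where `D_T(r)` is the sum
of the distances from the root to all leaves and `TW(T)` is the terminal
Wiener index (the sum of distances over all unordered pairs of leaves, i.e.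
half of the sum over ordered pairs). -/
theorem rhoC_ge_rootDistSum_sub_terminalWiener_div_numLeaves
    {V : Type} [Fintype V] [DecidableEq V] (T : TreeOn V) :
    (∑ v : T.Leaf, (T.level v.1 : ℝ)) -
        ((∑ v : T.Leaf, ∑ w : T.Leaf, (T.graph.dist v.1 w.1 : ℝ)) / 2) /
          (Fintype.card T.Leaf : ℝ)
      ≤ T.rhoC := by
    classical
  rcases isEmpty_or_nonempty T.Leaf with hE | hN
  · have hset : {μ : ℝ | ∃ x : T.Leaf → ℝ, x ≠ 0 ∧ T.ancMatrix.mulVec x = μ • x}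
        = (∅ : Set ℝ) := by
      ext μ
      simp only [Set.mem_setOf_eq, Set.mem_empty_iff_false, iff_false]
      rintro ⟨x, hx0, -⟩
      exact hx0 (funext fun i => (IsEmpty.false i).elim)
    have h0 : T.rhoC = 0 := by
      rw [TreeOn.rhoC, hset, Real.sSup_empty]
    rw [h0]
    simp [Finset.univ_eq_empty]
  · have hA : T.ancMatrix.IsHermitian := by
      rw [Matrix.IsHermitian, Matrix.conjTranspose_eq_transpose_of_trivial]
      ext i j
      simp only [Matrix.transpose_apply, TreeOn.ancMatrix, Matrix.of_apply]
      rw [T.lcaLevel_comm]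
    have key : ∑ v : T.Leaf, ∑ w : T.Leaf, T.ancMatrix v w ≤
        T.rhoC * (Fintype.card T.Leaf : ℝ) := rayleigh_ones hA
    set n : ℝ := (Fintype.card T.Leaf : ℝ) with hn'
    set D : ℝ := ∑ v : T.Leaf, (T.level v.1 : ℝ) with hD
    set Sd : ℝ := ∑ v : T.Leaf, ∑ w : T.Leaf, (T.graph.dist v.1 w.1 : ℝ) with hSd
    have hn : (0 : ℝ) < n := by
      rw [hn']
      exact_mod_cast Fintype.card_pos
    have e1 : ∑ v : T.Leaf, ∑ _w : T.Leaf, (T.level v.1 : ℝ) = n * D := by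
      calc ∑ v : T.Leaf, ∑ _w : T.Leaf, (T.level v.1 : ℝ)
          = ∑ v : T.Leaf, n * (T.level v.1 : ℝ) := by
            apply Finset.sum_congr rfl
            intro v _
            simp [Finset.sum_const, Finset.card_univ, nsmul_eq_mul, hn']
        _ = n * D := by rw [hD, Finset.mul_sum]
    have e2 : ∑ _v : T.Leaf, ∑ w : T.Leaf, (T.level w.1 : ℝ) = n * D := by
      rw [Finset.sum_comm]
      exact e1
    have hpt : ∀ v w : T.Leaf, (T.level v.1 : ℝ) + (T.level w.1 : ℝ)
        - (T.graph.dist v.1 w.1 : ℝ) ≤ 2 * (T.lcaLevel v.1 w.1 : ℝ) := by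
      intro v w
      have h := T.dist_lower v.1 w.1
      have h' : (T.level v.1 : ℝ) + (T.level w.1 : ℝ) - 2 * (T.lcaLevel v.1 w.1 : ℝ)
          ≤ (T.graph.dist v.1 w.1 : ℝ) := by exact_mod_cast h
      linarith
    have hsum : 2 * n * D - Sd ≤
        2 * ∑ v : T.Leaf, ∑ w : T.Leaf, T.ancMatrix v w := by
      have h1 : ∑ v : T.Leaf, ∑ w : T.Leaf,
          ((T.level v.1 : ℝ) + (T.level w.1 : ℝ) - (T.graph.dist v.1 w.1 : ℝ))
          ≤ ∑ v : T.Leaf, ∑ w : T.Leaf, 2 * (T.lcaLevel v.1 w.1 : ℝ) :=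
        Finset.sum_le_sum fun v _ => Finset.sum_le_sum fun w _ => hpt v w
      have h2 : ∑ v : T.Leaf, ∑ w : T.Leaf,
          ((T.level v.1 : ℝ) + (T.level w.1 : ℝ) - (T.graph.dist v.1 w.1 : ℝ))
          = 2 * n * D - Sd := by
        simp only [Finset.sum_sub_distrib, Finset.sum_add_distrib]
        rw [e1, e2, ← hSd]
        ring
      have h3 : ∑ v : T.Leaf, ∑ w : T.Leaf, 2 * (T.lcaLevel v.1 w.1 : ℝ)
          = 2 * ∑ v : T.Leaf, ∑ w : T.Leaf, T.ancMatrix v w := by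
        rw [Finset.mul_sum]
        apply Finset.sum_congr rfl
        intro v _
        rw [Finset.mul_sum]
        apply Finset.sum_congr rfl
        intro w _
        rfl
      rw [← h2, ← h3]
      exact h1
    have h5 : n * D - Sd / 2 ≤ T.rhoC * n := by nlinarith [key]
    calc D - (Sd / 2) / n = (n * D - Sd / 2) / n := by
          field_simp
      _ ≤ (T.rhoC * n) / n := by
          gcongr
      _ = T.rhoC := mul_div_cancel_right₀ _ (ne_of_gt hn)
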